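/- arXiv:2307.16353 — 7 statements merged into one kernel-verified Lean document; each statement's English description precedes it below -/
import Mathlib

section
/- Let (Ω, ℱ, μ) be a probability space, let Y⁰, Y¹ : Ω → ℝ and W : Ω → ℝ^N be measurable with Y¹ μ-integrable, and let h : ℝ^N → ℝ be measurable with h ∘ W μ-integrable and μ[h ∘ W | σ(Y⁰)] = Y⁰ μ-almost everywhere. Then Y⁰ is μ-integrable and ∫ Y⁰ dμ = ∫ h ∘ W dμ. Moreover, if Y : Ω → ℝ satisfies Y = Y¹ μ-almost everywhere (consistency at a post-treatment time), then the average treatment effect on the treated, τ* := ∫ (Y¹ − Y⁰) dμ, satisfies τ* = ∫ (Y − h ∘ W) dμ. -/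
open MeasureTheory

/-- Theorem 2 of the paper: if `h` is a synthetic control bridge function for the
treatment-free potential outcome `Y0`, then `Y0` is integrable with mean equal to the mean
of the synthetic control `h ∘ W`; moreover, if `Y = Y1` almost everywhere (post-treatment
consistency), the ATT `∫ (Y1 - Y0) dμ` equals `∫ (Y - h ∘ W) dμ`. -/
theorem spsc_att_identification {Ω : Type*} [MeasurableSpace Ω] (μ : Measure Ω)
    [IsProbabilityMeasure μ] {N : ℕ}
    (Y0 Y1 : Ω → ℝ) (W : Ω → Fin N → ℝ) (h : (Fin N → ℝ) → ℝ)
    (hY0 : Measurable Y0) (hY1 : Measurable Y1) (hW : Measurable W) (hh : Measurable h)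
    (hY1int : Integrable Y1 μ)
    (hint : Integrable (h ∘ W) μ)
    (hbridge : μ[h ∘ W | MeasurableSpace.comap Y0 inferInstance] =ᵐ[μ] Y0) :
    Integrable Y0 μ ∧
    (∫ ω, Y0 ω ∂μ) = (∫ ω, h (W ω) ∂μ) ∧
    ∀ Y : Ω → ℝ, Y =ᵐ[μ] Y1 →
      (∫ ω, (Y1 ω - Y0 ω) ∂μ) = (∫ ω, (Y ω - h (W ω)) ∂μ) := by
  have hle : MeasurableSpace.comap Y0 inferInstance ≤ ‹MeasurableSpace Ω› :=
    hY0.comap_le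
  have hY0int : Integrable Y0 μ := (integrable_condExp (f := h ∘ W)).congr hbridge
  have hmean : (∫ ω, Y0 ω ∂μ) = (∫ ω, h (W ω) ∂μ) := by
    calc (∫ ω, Y0 ω ∂μ)
        = ∫ ω, (μ[h ∘ W | MeasurableSpace.comap Y0 inferInstance]) ω ∂μ :=
          (integral_congr_ae hbridge).symm
      _ = ∫ ω, h (W ω) ∂μ := integral_condExp hle
  refine ⟨hY0int, hmean, fun Y hY => ?_⟩
  have hYint : Integrable Y μ := hY1int.congr hY.symm
  have h2 := integral_sub hYint hint
  simp only [Function.comp] at h2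
  rw [integral_sub hY1int hY0int, h2, hmean, integral_congr_ae hY]
end

section
/- Let (Ω, ℱ, μ) be a probability space, let Y, Y⁰, Y¹ : Ω → ℝ, W : Ω → ℝ^N, X₀ : Ω → ℝ^q, X : Ω → ℝ^p be measurable with Y¹ μ-integrable, and let h : ℝ^N × ℝ^q × ℝ^p → ℝ be measurable with h(W, X₀, X) μ-integrable and μ[h(W, X₀, X) | σ(Y⁰, X₀, X)] = Y⁰ μ-almost everywhere (the covariate bridge assumption). Then: (i) if Y = Y⁰ μ-a.e. (pre-treatment consistency), then μ[Y − h(W, X₀, X) | σ(Y, X₀, X)] = 0 μ-a.e.; (ii) Y⁰ is μ-integrable and ∫ Y⁰ dμ = ∫ h(W, X₀, X) dμ; (iii) if Y = Y¹ μ-a.e. (post-treatment consistency), then the average treatment effect on the treated τ* := ∫ (Y¹ − Y⁰) dμ equals ∫ (Y − h(W, X₀, X)) dμ. -/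
open MeasureTheory

/-- Theorem 4 of the paper: identification with covariates. If `h` is a covariate
synthetic control bridge function, i.e. `μ[h(W, X0, X) | σ(Y0, X0, X)] = Y0` a.e., then:
(i) under pre-treatment consistency `Y = Y0` a.e., the conditional mean of the residual
`Y - h(W, X0, X)` given `σ(Y, X0, X)` vanishes a.e.;
(ii) `Y0` is integrable with `∫ Y0 = ∫ h(W, X0, X)`;
(iii) under post-treatment consistency `Y = Y1` a.e., the ATT `∫ (Y1 - Y0)` equals
`∫ (Y - h(W, X0, X))`. -/
theorem spsc_att_identification_with_covariates {Ω : Type*} [MeasurableSpace Ω]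
    (μ : Measure Ω) [IsProbabilityMeasure μ] {N q p : ℕ}
    (Y Y0 Y1 : Ω → ℝ) (W : Ω → Fin N → ℝ) (X0 : Ω → Fin q → ℝ) (X : Ω → Fin p → ℝ)
    (h : (Fin N → ℝ) × (Fin q → ℝ) × (Fin p → ℝ) → ℝ)
    (hY : Measurable Y) (hY0 : Measurable Y0) (hY1 : Measurable Y1) (hW : Measurable W)
    (hX0 : Measurable X0) (hX : Measurable X) (hh : Measurable h)
    (hY1int : Integrable Y1 μ)
    (hint : Integrable (fun ω => h (W ω, X0 ω, X ω)) μ)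
    (hbridge : μ[(fun ω => h (W ω, X0 ω, X ω)) |
        MeasurableSpace.comap (fun ω => (Y0 ω, X0 ω, X ω)) inferInstance] =ᵐ[μ] Y0) :
    (Y =ᵐ[μ] Y0 →
      μ[(fun ω => Y ω - h (W ω, X0 ω, X ω)) |
          MeasurableSpace.comap (fun ω => (Y ω, X0 ω, X ω)) inferInstance] =ᵐ[μ] 0) ∧
    (Integrable Y0 μ ∧ (∫ ω, Y0 ω ∂μ) = (∫ ω, h (W ω, X0 ω, X ω) ∂μ)) ∧
    (Y =ᵐ[μ] Y1 →
      (∫ ω, (Y1 ω - Y0 ω) ∂μ) = (∫ ω, (Y ω - h (W ω, X0 ω, X ω)) ∂μ)) := by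
  set H : Ω → ℝ := fun ω => h (W ω, X0 ω, X ω) with hH
  have hHmeas : Measurable H := hh.comp (hW.prodMk (hX0.prodMk hX))
  have hT0 : Measurable (fun ω => (Y0 ω, X0 ω, X ω)) := hY0.prodMk (hX0.prodMk hX)
  have hm0 : MeasurableSpace.comap (fun ω => (Y0 ω, X0 ω, X ω)) inferInstance ≤
      (inferInstance : MeasurableSpace Ω) := hT0.comap_le
  -- part (ii)
  have hY0int : Integrable Y0 μ := (integrable_condExp.congr hbridge)
  have hiY0 : (∫ ω, Y0 ω ∂μ) = (∫ ω, H ω ∂μ) := by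
    rw [← integral_congr_ae hbridge, integral_condExp hm0]
  refine ⟨?_, ⟨hY0int, hiY0⟩, ?_⟩
  · intro hpre
    have hYint : Integrable Y μ := hY0int.congr hpre.symm
    have hT : Measurable (fun ω => (Y ω, X0 ω, X ω)) := hY.prodMk (hX0.prodMk hX)
    have hm : MeasurableSpace.comap (fun ω => (Y ω, X0 ω, X ω)) inferInstance ≤
        (inferInstance : MeasurableSpace Ω) := hT.comap_le
    have hYm : Measurable[MeasurableSpace.comap (fun ω => (Y ω, X0 ω, X ω)) inferInstance] Y := by
      have h2 : Measurable[MeasurableSpace.comap (fun ω => (Y ω, X0 ω, X ω)) inferInstance]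
          (fun ω => (Y ω, X0 ω, X ω)) := Measurable.of_comap_le le_rfl
      exact (measurable_fst.comp h2 : _)
    have hkey : Y =ᵐ[μ] μ[H | MeasurableSpace.comap (fun ω => (Y ω, X0 ω, X ω)) inferInstance] := by
      refine ae_eq_condExp_of_forall_setIntegral_eq hm hint
        (fun s _ _ => hYint.integrableOn) (fun s hs _ => ?_)
        (StronglyMeasurable.aestronglyMeasurable hYm.stronglyMeasurable)
      obtain ⟨A, hA, rfl⟩ := hs
      have hsae : ((fun ω => (Y ω, X0 ω, X ω)) ⁻¹' A : Set Ω) =ᵐ[μ]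
          ((fun ω => (Y0 ω, X0 ω, X ω)) ⁻¹' A : Set Ω) := by
        filter_upwards [hpre] with ω hω
        change ((Y ω, X0 ω, X ω) ∈ A) = ((Y0 ω, X0 ω, X ω) ∈ A)
        rw [hω]
      have hsmeas : MeasurableSet ((fun ω => (Y ω, X0 ω, X ω)) ⁻¹' A) := hT hA
      have hs0meas : MeasurableSet ((fun ω => (Y0 ω, X0 ω, X ω)) ⁻¹' A) := hT0 hA
      calc ∫ x in (fun ω => (Y ω, X0 ω, X ω)) ⁻¹' A, Y x ∂μ
          = ∫ x in (fun ω => (Y ω, X0 ω, X ω)) ⁻¹' A, Y0 x ∂μ := by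
            refine setIntegral_congr_ae hsmeas ?_
            filter_upwards [hpre] with ω hω _ using hω
        _ = ∫ x in (fun ω => (Y0 ω, X0 ω, X ω)) ⁻¹' A, Y0 x ∂μ := setIntegral_congr_set hsae
        _ = ∫ x in (fun ω => (Y0 ω, X0 ω, X ω)) ⁻¹' A, (μ[H | MeasurableSpace.comap
              (fun ω => (Y0 ω, X0 ω, X ω)) inferInstance]) x ∂μ := by
            refine setIntegral_congr_ae hs0meas ?_
            filter_upwards [hbridge] with ω hω _ using hω.symm
        _ = ∫ x in (fun ω => (Y0 ω, X0 ω, X ω)) ⁻¹' A, H x ∂μ :=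
            setIntegral_condExp hm0 hint ⟨A, hA, rfl⟩
        _ = ∫ x in (fun ω => (Y ω, X0 ω, X ω)) ⁻¹' A, H x ∂μ :=
            setIntegral_congr_set hsae.symm
    have hsub : μ[(fun ω => Y ω - H ω) |
          MeasurableSpace.comap (fun ω => (Y ω, X0 ω, X ω)) inferInstance] =ᵐ[μ]
        fun ω => (μ[Y | MeasurableSpace.comap (fun ω => (Y ω, X0 ω, X ω)) inferInstance]) ω -
          (μ[H | MeasurableSpace.comap (fun ω => (Y ω, X0 ω, X ω)) inferInstance]) ω :=
      condExp_sub hYint hint _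
    have hYc : μ[Y | MeasurableSpace.comap (fun ω => (Y ω, X0 ω, X ω)) inferInstance] = Y :=
      condExp_of_stronglyMeasurable hm hYm.stronglyMeasurable hYint
    filter_upwards [hsub, hkey] with ω h1 h2
    simp only [hH] at h1
    rw [h1, hYc, h2, sub_self, Pi.zero_apply]
  · intro hpost
    have hYint : Integrable Y μ := hY1int.congr hpost.symm
    rw [integral_sub hY1int hY0int, integral_sub hYint hint,
      integral_congr_ae hpost, hiY0]
end

section
/- Let (Ω, ℱ, μ) be a probability space, λ = (λ₁,…,λ_r) : Ω → ℝ^r measurable with each coordinate μ-integrable, and e₀, e₁,…,e_N : Ω → ℝ μ-integrable. Let ω₁,…,ω_N ∈ ℝ and suppose μ[e_i | σ(λ, e₀)] = ω_i · e₀ μ-almost everywhere for each i = 1,…,N. Let μ₀, μ₁,…,μ_N ∈ ℝ^r and define W_i := ⟨μ_i, λ⟩ + e_i for i = 1,…,N and Y⁰ := ⟨μ₀, λ⟩ + e₀. If γ ∈ ℝ^N satisfies μ₀ = Σ_{i=1}^N γ_i μ_i and Σ_{i=1}^N γ_i ω_i = 1, then μ[Σ_{i=1}^N γ_i W_i | σ(λ,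 e₀)] = Y⁰ μ-almost everywhere. -/
open MeasureTheory

/-- In the interactive fixed effects model with correlated errors
(`Y0 = ⟨μ₀, λ⟩ + e₀`, `W i = ⟨μ i, λ⟩ + e i`, `μ[e i | σ(λ, e₀)] = ω i • e₀`),
any weight vector `γ` with `μ₀ = Σ γ i • μ i` and `Σ γ i * ω i = 1` yields a linear
synthetic control satisfying Condition 1 of the paper:
`μ[Σ γ i • W i | σ(λ, e₀)] = Y0` a.e. -/
theorem spsc_ifem_correlated_errors_bridge {Ω : Type*} [MeasurableSpace Ω]
    (μ : Measure Ω) [IsProbabilityMeasure μ] {r N : ℕ}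
    (lam : Ω → Fin r → ℝ) (e0 : Ω → ℝ) (e : Fin N → Ω → ℝ)
    (hlam : Measurable lam) (he0 : Measurable e0)
    (hlamInt : ∀ j, Integrable (fun ω => lam ω j) μ)
    (he0Int : Integrable e0 μ)
    (heInt : ∀ i, Integrable (e i) μ)
    (ωc : Fin N → ℝ)
    (hcond : ∀ i, μ[e i | MeasurableSpace.comap (fun ω => (lam ω, e0 ω)) inferInstance]
      =ᵐ[μ] fun ω => ωc i * e0 ω)
    (m0 : Fin r → ℝ) (m : Fin N → Fin r → ℝ) (γ : Fin N → ℝ)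
    (hlin : ∀ j, m0 j = ∑ i, γ i * m i j)
    (hw : ∑ i, γ i * ωc i = 1) :
    μ[(fun ω => ∑ i, γ i * ((∑ j, m i j * lam ω j) + e i ω)) |
        MeasurableSpace.comap (fun ω => (lam ω, e0 ω)) inferInstance]
      =ᵐ[μ] fun ω => (∑ j, m0 j * lam ω j) + e0 ω := by
  set mG := MeasurableSpace.comap (fun ω => (lam ω, e0 ω)) inferInstance with hmG
  have hG' := (hlam.prodMk he0).comap_le
  rw [← hmG] at hG'
  have hG := hG'
  have hmap : Measurable[mG] (fun ω => (lam ω, e0 ω)) := fun s hs => ⟨s, hs, rfl⟩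
  have hlamG : ∀ j, Measurable[mG] (fun ω => lam ω j) := fun j =>
    ((measurable_pi_apply j).comp measurable_fst).comp hmap
  -- the factor part is mG-measurable
  have hgMeas : StronglyMeasurable[mG] (fun ω => ∑ i, γ i * ∑ j, m i j * lam ω j) := by
    apply Measurable.stronglyMeasurable
    apply Finset.measurable_sum
    intro i _
    exact (Finset.measurable_sum _ fun j _ => ((hlamG j).const_mul _)).const_mul _
  have hgInt : Integrable (fun ω => ∑ i, γ i * ∑ j, m i j * lam ω j) μ := by
    apply integrable_finset_sum
    intro i _
    exact (integrable_finset_sum _ fun j _ => (hlamInt j).const_mul _).const_mul _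
  have hhInt : Integrable (fun ω => ∑ i, γ i * e i ω) μ :=
    integrable_finset_sum _ fun i _ => (heInt i).const_mul _
  have hsplit : (fun ω => ∑ i, γ i * ((∑ j, m i j * lam ω j) + e i ω))
      = (fun ω => ∑ i, γ i * ∑ j, m i j * lam ω j) + fun ω => ∑ i, γ i * e i ω := by
    funext ω
    simp [mul_add, Finset.sum_add_distrib]
  rw [hsplit]
  have h1 : μ[(fun ω => ∑ i, γ i * ∑ j, m i j * lam ω j)|mG]
      = fun ω => ∑ i, γ i * ∑ j, m i j * lam ω j :=
    condExp_of_stronglyMeasurable (μ := μ) hG hgMeas hgInt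
  have h2 : μ[(fun ω => ∑ i, γ i * e i ω)|mG] =ᵐ[μ] fun ω => e0 ω := by
    have hsum : (fun ω => ∑ i, γ i * e i ω) = ∑ i, γ i • e i := by
      funext ω; simp [Finset.sum_apply]
    rw [hsum]
    calc μ[∑ i, γ i • e i|mG]
        =ᵐ[μ] ∑ i, μ[γ i • e i|mG] :=
          condExp_finset_sum (fun i _ => (heInt i).smul (γ i)) mG
      _ =ᵐ[μ] fun ω => e0 ω := by
          have hterm : ∀ i : Fin N, μ[γ i • e i|mG] =ᵐ[μ] fun ω => γ i * (ωc i * e0 ω) := by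
            intro i
            exact (condExp_smul (γ i) (e i) mG).trans ((hcond i).mono fun ω hω => by
              simp [hω])
          have := eventuallyEq_sum (s := Finset.univ) (fun i _ => hterm i)
          refine this.trans ?_
          filter_upwards with ω
          simp only [Finset.sum_apply]
          rw [show (∑ i, γ i * (ωc i * e0 ω)) = (∑ i, γ i * ωc i) * e0 ω by
            rw [Finset.sum_mul]; exact Finset.sum_congr rfl fun i _ => by ring, hw, one_mul]
  have hadd := condExp_add (m := mG) hgInt hhInt
  refine hadd.trans ?_
  rw [h1]
  refine (Filter.EventuallyEq.add (Filter.EventuallyEq.refl _ _) h2).trans ?_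
  filter_upwards with ω
  show (∑ i, γ i * ∑ j, m i j * lam ω j) + e0 ω = (∑ j, m0 j * lam ω j) + e0 ω
  congr 1
  simp only [hlin, Finset.mul_sum, Finset.sum_mul]
  rw [Finset.sum_comm]
  exact Finset.sum_congr rfl fun i _ => Finset.sum_congr rfl fun j _ => by ring
end

section
/- Let (Ω, ℱ, μ) be a probability space, λ : Ω → ℝ^r measurable with square-integrable coordinates, and e₀ ∈ L²(μ) with Var(e₀) > 0, with λ and e₀ independent. Let e₁,…,e_N : Ω → ℝ be μ-integrable with μ[e_i | σ(λ, e₀)] = 0 μ-almost everywhere for i = 1,…,N. Let μ₀, μ₁,…,μ_N ∈ ℝ^r and define W_i := ⟨μ_i, λ⟩ + e_i and Y⁰ := ⟨μ₀, λ⟩ + e₀. Then there is no γ ∈ ℝ^N with μ[Σ_{i=1}^N γ_i W_i | σ(λ, e₀)] = Y⁰ μ-almost everywhere. -/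
open MeasureTheory ProbabilityTheory

/-- In the interactive fixed effects model with uncorrelated (mean-independent) errors,
with `λ` and `e₀` independent, `Var(e₀) > 0`, and `μ[e i | σ(λ, e₀)] = 0` for the donor
errors, no linear synthetic control `Σ γ i • W i` satisfies Condition 1 of the paper,
i.e. there is no `γ` with `μ[Σ γ i • W i | σ(λ, e₀)] = Y0` a.e. -/
theorem spsc_ifem_independent_errors_no_linear_bridge {Ω : Type*} [MeasurableSpace Ω]
    (μ : Measure Ω) [IsProbabilityMeasure μ] {r N : ℕ}
    (lam : Ω → Fin r → ℝ) (e0 : Ω → ℝ) (e : Fin N → Ω → ℝ)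
    (hlam : Measurable lam) (he0 : Measurable e0)
    (hlam2 : ∀ j, MemLp (fun ω => lam ω j) 2 μ)
    (he02 : MemLp e0 2 μ)
    (hvar : 0 < variance e0 μ)
    (hind : IndepFun lam e0 μ)
    (heInt : ∀ i, Integrable (e i) μ)
    (hcond : ∀ i, μ[e i | MeasurableSpace.comap (fun ω => (lam ω, e0 ω)) inferInstance]
      =ᵐ[μ] 0)
    (m0 : Fin r → ℝ) (m : Fin N → Fin r → ℝ) :
    ¬ ∃ γ : Fin N → ℝ,
      μ[(fun ω => ∑ i, γ i * ((∑ j, m i j * lam ω j) + e i ω)) |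
          MeasurableSpace.comap (fun ω => (lam ω, e0 ω)) inferInstance]
        =ᵐ[μ] fun ω => (∑ j, m0 j * lam ω j) + e0 ω := by
  rintro ⟨γ, h⟩
  set T : Ω → (Fin r → ℝ) × ℝ := fun ω => (lam ω, e0 ω) with hT
  have hTmeas : Measurable T := hlam.prodMk he0
  have hle : MeasurableSpace.comap T inferInstance ≤ ‹MeasurableSpace Ω› := hTmeas.comap_le
  have hlamInt : ∀ j, Integrable (fun ω => lam ω j) μ :=
    fun j => (hlam2 j).integrable one_le_two
  set A : Ω → ℝ := fun ω => ∑ i, γ i * ∑ j, m i j * lam ω j with hA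
  have hAint : Integrable A μ := by
    apply integrable_finset_sum
    intro i _
    exact (integrable_finset_sum _ (fun j _ => (hlamInt j).const_mul _)).const_mul _
  have hAm : StronglyMeasurable[MeasurableSpace.comap T inferInstance] A := by
    have hg : Measurable (fun p : (Fin r → ℝ) × ℝ => ∑ i, γ i * ∑ j, m i j * p.1 j) := by
      apply Finset.measurable_sum
      intro i _
      exact (Finset.measurable_sum _ fun j _ =>
        ((measurable_pi_apply j).comp measurable_fst).const_mul _).const_mul _
    exact (hg.comp (Measurable.of_comap_le le_rfl)).stronglyMeasurable
  have hW : (fun ω => ∑ i, γ i * ((∑ j, m i j * lam ω j) + e i ω))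
      = A + fun ω => ∑ i, γ i * e i ω := by
    funext ω
    simp [hA, Pi.add_apply, mul_add, Finset.sum_add_distrib]
  have hBint : Integrable (fun ω => ∑ i, γ i * e i ω) μ :=
    integrable_finset_sum _ fun i _ => (heInt i).const_mul _
  have hB0 : μ[(fun ω => ∑ i, γ i * e i ω)|MeasurableSpace.comap T inferInstance] =ᵐ[μ] 0 := by
    have heq : (fun ω => ∑ i, γ i * e i ω) = ∑ i, γ i • e i := by
      funext ω; simp [Finset.sum_apply]
    rw [heq]
    have h1 : μ[∑ i, γ i • e i|MeasurableSpace.comap T inferInstance] =ᵐ[μ] ∑ i, μ[γ i • e i|MeasurableSpace.comap T inferInstance] :=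
      condExp_finset_sum (fun i _ => (heInt i).smul (γ i)) _
    refine h1.trans ?_
    have h2 : ∀ i : Fin N, μ[γ i • e i|MeasurableSpace.comap T inferInstance] =ᵐ[μ] 0 := by
      intro i
      refine (condExp_smul (γ i) (e i) _).trans ?_
      filter_upwards [hcond i] with ω hω
      simp [hω]
    have hall : ∀ᵐ ω ∂μ, ∀ i : Fin N, (μ[γ i • e i|MeasurableSpace.comap T inferInstance]) ω = 0 :=
      ae_all_iff.mpr fun i => h2 i
    filter_upwards [hall] with ω hω
    simp [Finset.sum_apply, hω]
  have hce : μ[(fun ω => ∑ i, γ i * ((∑ j, m i j * lam ω j) + e i ω))|MeasurableSpace.comap T inferInstance] =ᵐ[μ] A := by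
    rw [hW]
    refine (condExp_add hAint hBint _).trans ?_
    have hAeq : μ[A|MeasurableSpace.comap T inferInstance] = A := condExp_of_stronglyMeasurable hle hAm hAint
    filter_upwards [hB0] with ω hω
    simp [hAeq, hω]
  have hAe : A =ᵐ[μ] fun ω => (∑ j, m0 j * lam ω j) + e0 ω := hce.symm.trans h
  set gg : (Fin r → ℝ) → ℝ :=
    fun v => (∑ i, γ i * ∑ j, m i j * v j) - ∑ j, m0 j * v j with hgg
  have hggm : Measurable gg := by
    apply Measurable.sub
    · exact Finset.measurable_sum _ fun i _ =>
        (Finset.measurable_sum _ fun j _ => (measurable_pi_apply j).const_mul _).const_mul _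
    · exact Finset.measurable_sum _ fun j _ => (measurable_pi_apply j).const_mul _
  have he0eq : e0 =ᵐ[μ] gg ∘ lam := by
    filter_upwards [hAe] with ω hω
    simp only [Function.comp_apply, hgg]
    have : A ω = (∑ j, m0 j * lam ω j) + e0 ω := hω
    simp only [hA] at this
    linarith
  have hIndep : IndepFun (gg ∘ lam) e0 μ := hind.comp hggm measurable_id
  have hIndep0 : IndepFun e0 e0 μ := hIndep.congr he0eq.symm Filter.EventuallyEq.rfl
  have hmul : ∫ ω, (e0 ω * e0 ω) ∂μ = (∫ ω, e0 ω ∂μ) * (∫ ω, e0 ω ∂μ) :=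
    hIndep0.integral_fun_mul_eq_mul_integral he02.aestronglyMeasurable he02.aestronglyMeasurable
  have hv : variance e0 μ = 0 := by
    rw [variance_eq_sub he02]
    have hsq : ∫ ω, (e0 ω)^2 ∂μ = (∫ ω, e0 ω ∂μ)^2 := by
      simpa [pow_two] using hmul
    simp only [Pi.pow_apply] at *
    rw [hsq]
    ring
  exact absurd hv (ne_of_gt hvar)
end

section
/- Let r, N ∈ ℕ, μ₀, μ₁,…,μ_N ∈ ℝ^r, and γ† ∈ ℝ^N with μ₀ = Σ_{i=1}^N γ_i† μ_i. Let λ : ℕ → ℝ^r and e_i : ℕ → ℝ (i = 0,1,…,N) be sequences such that, as T → ∞: (1/T)Σ_{t=1}^T λ_t → 0, (1/T)Σ_{t=1}^T λ_t λ_tᵀ → Λ for some matrix Λ ∈ ℝ^{r×r}, (1/T)Σ_{t=1}^T e_{it} e_{jt} → σ² if i = j and → 0 if i ≠ j (i, j ∈ {0,…,N}), and (1/T)Σ_{t=1}^T e_{it} λ_t → 0 for every i. Define W_{it} := ⟨μ_i, λ_t⟩ + e_{it} and Y_t := ⟨μ₀, λ_t⟩ + e_{0t}. Then for every γ ∈ ℝ^N,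 the least-squares criterion Q_T(γ) := (1/T)Σ_{t=1}^T (Y_t − Σ_{i=1}^N γ_i W_{it})² converges, as T → ∞, to Q∞(γ) := m(γ)ᵀ Λ m(γ) + (1 + Σ_{i=1}^N γ_i²) σ², where m(γ) := Σ_{i=1}^N (γ_i† − γ_i) μ_i. -/
open Filter

private lemma spsc_sum_swap_mul {ι : Type*} [Fintype ι] (f : ι → ℕ → ℝ) (x : ℝ) (T : ℕ) :
    x * ∑ t ∈ Finset.range T, ∑ i, f i t
      = ∑ i, x * ∑ t ∈ Finset.range T, f i t := by
  rw [Finset.sum_comm, Finset.mul_sum]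

/-- Deterministic version of the probability-limit computation (S.3) in Supplement S1.1
of the paper: under the stated Cesàro-limit conditions on the latent factors `λ_t` and
errors `e_{it}` in the interactive fixed effects model, the least-squares criterion
`Q_T(γ) = (1/T) Σ_t (Y_t − Σ_i γ_i W_{it})²` converges, for every `γ`, to
`m(γ)ᵀ Λ m(γ) + (1 + Σ_i γ_i²) σ²` where `m(γ) = Σ_i (γ†_i − γ_i) μ_i`. -/
theorem spsc_ols_criterion_limit {r N : ℕ}
    (m0 : Fin r → ℝ) (m : Fin N → Fin r → ℝ)
    (γdag : Fin N → ℝ) (hγdag : ∀ j, m0 j = ∑ i, γdag i * m i j)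
    (lam : ℕ → Fin r → ℝ) (e : Fin (N + 1) → ℕ → ℝ)
    (Λ : Matrix (Fin r) (Fin r) ℝ) (σ2 : ℝ)
    (hlam : ∀ j, Tendsto (fun T : ℕ => (1 / (T : ℝ)) * ∑ t ∈ Finset.range T, lam t j)
      atTop (nhds 0))
    (hΛ : ∀ j k, Tendsto
      (fun T : ℕ => (1 / (T : ℝ)) * ∑ t ∈ Finset.range T, lam t j * lam t k)
      atTop (nhds (Λ j k)))
    (he : ∀ i j : Fin (N + 1), Tendsto
      (fun T : ℕ => (1 / (T : ℝ)) * ∑ t ∈ Finset.range T, e i t * e j t)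
      atTop (nhds (if i = j then σ2 else 0)))
    (helam : ∀ (i : Fin (N + 1)) (j : Fin r), Tendsto
      (fun T : ℕ => (1 / (T : ℝ)) * ∑ t ∈ Finset.range T, e i t * lam t j)
      atTop (nhds 0)) :
    ∀ γ : Fin N → ℝ, Tendsto
      (fun T : ℕ => (1 / (T : ℝ)) * ∑ t ∈ Finset.range T,
        (((∑ j, m0 j * lam t j) + e 0 t)
          - ∑ i, γ i * ((∑ j, m i j * lam t j) + e i.succ t)) ^ 2)
      atTop
      (nhds ((∑ j, ∑ k,
          (∑ i, (γdag i - γ i) * m i j) * Λ j k * (∑ i, (γdag i - γ i) * m i k))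
        + (1 + ∑ i, (γ i) ^ 2) * σ2)) := by
  intro γ
  set M : Fin r → ℝ := fun j => ∑ i, (γdag i - γ i) * m i j with hM
  set d : Fin (N + 1) → ℝ := fun i => Fin.cases 1 (fun i => -γ i) i with hd
  have hd0 : d 0 = 1 := rfl
  have hds : ∀ i : Fin N, d i.succ = -γ i := fun i => rfl
  -- per-t algebraic identity
  have ht : ∀ t : ℕ,
      (((∑ j, m0 j * lam t j) + e 0 t)
          - ∑ i, γ i * ((∑ j, m i j * lam t j) + e i.succ t)) ^ 2
      = (∑ j, ∑ k, M j * M k * (lam t j * lam t k))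
        + (∑ i : Fin (N + 1), ∑ j, 2 * d i * M j * (e i t * lam t j))
        + (∑ i : Fin (N + 1), ∑ i' : Fin (N + 1), d i * d i' * (e i t * e i' t)) := by
    intro t
    have hX : (∑ j, m0 j * lam t j) - ∑ i, γ i * ∑ j, m i j * lam t j
        = ∑ j, M j * lam t j := by
      have h1 : (∑ j, m0 j * lam t j) = ∑ i, ∑ j, γdag i * m i j * lam t j := by
        simp only [hγdag, Finset.sum_mul]; rw [Finset.sum_comm]
      have h2 : (∑ i, γ i * ∑ j, m i j * lam t j)
          = ∑ i, ∑ j, γ i * m i j * lam t j := by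
        refine Finset.sum_congr rfl fun i _ => ?_
        rw [Finset.mul_sum]
        exact Finset.sum_congr rfl fun j _ => by ring
      have h3 : (∑ j, M j * lam t j)
          = ∑ i, ∑ j, (γdag i - γ i) * m i j * lam t j := by
        simp only [hM, Finset.sum_mul]; rw [Finset.sum_comm]
      rw [h1, h2, h3, ← Finset.sum_sub_distrib]
      refine Finset.sum_congr rfl fun i _ => ?_
      rw [← Finset.sum_sub_distrib]
      exact Finset.sum_congr rfl fun j _ => by ring
    have hY : e 0 t - ∑ i, γ i * e i.succ t = ∑ i : Fin (N + 1), d i * e i t := by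
      rw [Fin.sum_univ_succ, hd0, one_mul]
      simp only [hds, neg_mul]
      rw [Finset.sum_neg_distrib, ← sub_eq_add_neg]
    have hA : (((∑ j, m0 j * lam t j) + e 0 t)
          - ∑ i, γ i * ((∑ j, m i j * lam t j) + e i.succ t))
        = (∑ j, M j * lam t j) + (∑ i : Fin (N + 1), d i * e i t) := by
      rw [← hX, ← hY]
      simp only [mul_add, Finset.sum_add_distrib]
      ring
    rw [hA, add_sq]
    have hs1 : (∑ j, M j * lam t j) ^ 2
        = ∑ j, ∑ k, M j * M k * (lam t j * lam t k) := by
      rw [sq, Finset.sum_mul_sum]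
      exact Finset.sum_congr rfl fun j _ =>
        Finset.sum_congr rfl fun k _ => by ring
    have hs2 : 2 * (∑ j, M j * lam t j) * (∑ i : Fin (N + 1), d i * e i t)
        = ∑ i : Fin (N + 1), ∑ j, 2 * d i * M j * (e i t * lam t j) := by
      rw [mul_assoc, Finset.sum_mul_sum]
      simp only [Finset.mul_sum]
      rw [Finset.sum_comm]
      exact Finset.sum_congr rfl fun i _ =>
        Finset.sum_congr rfl fun j _ => by ring
    have hs3 : (∑ i : Fin (N + 1), d i * e i t) ^ 2
        = ∑ i : Fin (N + 1), ∑ i' : Fin (N + 1), d i * d i' * (e i t * e i' t) := by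
      rw [sq, Finset.sum_mul_sum]
      exact Finset.sum_congr rfl fun i _ =>
        Finset.sum_congr rfl fun i' _ => by ring
    rw [hs1, hs2, hs3]
  -- rewrite the Cesàro average as a combination of the converging averages
  have key : ∀ T : ℕ,
      (1 / (T : ℝ)) * ∑ t ∈ Finset.range T,
        (((∑ j, m0 j * lam t j) + e 0 t)
          - ∑ i, γ i * ((∑ j, m i j * lam t j) + e i.succ t)) ^ 2
      = (∑ j, ∑ k, M j * M k
            * ((1 / (T : ℝ)) * ∑ t ∈ Finset.range T, lam t j * lam t k))
        + (∑ i : Fin (N + 1), ∑ j, 2 * d i * M j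
            * ((1 / (T : ℝ)) * ∑ t ∈ Finset.range T, e i t * lam t j))
        + (∑ i : Fin (N + 1), ∑ i' : Fin (N + 1), d i * d i'
            * ((1 / (T : ℝ)) * ∑ t ∈ Finset.range T, e i t * e i' t)) := by
    intro T
    simp only [ht]
    rw [Finset.sum_add_distrib, Finset.sum_add_distrib, mul_add, mul_add]
    congr 1
    · congr 1
      · rw [spsc_sum_swap_mul]
        refine Finset.sum_congr rfl fun j _ => ?_
        rw [spsc_sum_swap_mul]
        refine Finset.sum_congr rfl fun k _ => ?_
        rw [← Finset.mul_sum _ _ (M j * M k)]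
        ring
      · rw [spsc_sum_swap_mul]
        refine Finset.sum_congr rfl fun i _ => ?_
        rw [spsc_sum_swap_mul]
        refine Finset.sum_congr rfl fun j _ => ?_
        rw [← Finset.mul_sum _ _ (2 * d i * M j)]
        ring
    · rw [spsc_sum_swap_mul]
      refine Finset.sum_congr rfl fun i _ => ?_
      rw [spsc_sum_swap_mul]
      refine Finset.sum_congr rfl fun i' _ => ?_
      rw [← Finset.mul_sum _ _ (d i * d i')]
      ring
  simp only [key]
  have h1 : Tendsto (fun T : ℕ => ∑ j, ∑ k, M j * M k
        * ((1 / (T : ℝ)) * ∑ t ∈ Finset.range T, lam t j * lam t k))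
      atTop (nhds (∑ j, ∑ k, M j * M k * Λ j k)) :=
    tendsto_finset_sum _ fun j _ => tendsto_finset_sum _ fun k _ =>
      (hΛ j k).const_mul _
  have h2 : Tendsto (fun T : ℕ => ∑ i : Fin (N + 1), ∑ j, 2 * d i * M j
        * ((1 / (T : ℝ)) * ∑ t ∈ Finset.range T, e i t * lam t j))
      atTop (nhds 0) := by
    have : Tendsto (fun T : ℕ => ∑ i : Fin (N + 1), ∑ j, 2 * d i * M j
        * ((1 / (T : ℝ)) * ∑ t ∈ Finset.range T, e i t * lam t j))
        atTop (nhds (∑ i : Fin (N + 1), ∑ j : Fin r, 2 * d i * M j * 0)) :=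
      tendsto_finset_sum _ fun i _ => tendsto_finset_sum _ fun j _ =>
        (helam i j).const_mul _
    simpa using this
  have h3 : Tendsto (fun T : ℕ => ∑ i : Fin (N + 1), ∑ i' : Fin (N + 1), d i * d i'
        * ((1 / (T : ℝ)) * ∑ t ∈ Finset.range T, e i t * e i' t))
      atTop (nhds (∑ i : Fin (N + 1), ∑ i' : Fin (N + 1), d i * d i'
        * (if i = i' then σ2 else 0))) :=
    tendsto_finset_sum _ fun i _ => tendsto_finset_sum _ fun i' _ =>
      (he i i').const_mul _
  have htot := (h1.add h2).add h3
  have e1 : (∑ j, ∑ k,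
      (∑ i, (γdag i - γ i) * m i j) * Λ j k * (∑ i, (γdag i - γ i) * m i k))
      = ∑ j, ∑ k, M j * M k * Λ j k := by
    refine Finset.sum_congr rfl fun j _ => Finset.sum_congr rfl fun k _ => ?_
    rw [hM]; ring
  have e2 : (∑ i : Fin (N + 1), ∑ i' : Fin (N + 1), d i * d i'
      * (if i = i' then σ2 else 0)) = (1 + ∑ i, (γ i) ^ 2) * σ2 := by
    have hrow : ∀ i : Fin (N + 1), (∑ i' : Fin (N + 1), d i * d i'
        * (if i = i' then σ2 else 0)) = d i * d i * σ2 := by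
      intro i
      rw [Finset.sum_eq_single i]
      · simp
      · intro b _ hb; simp [Ne.symm hb]
      · simp
    simp only [hrow]
    rw [Fin.sum_univ_succ, hd0]
    simp only [hds]
    rw [add_mul, Finset.sum_mul, one_mul, one_mul]
    congr 1
    exact Finset.sum_congr rfl fun i _ => by ring
  rw [e2] at htot
  rw [e1]
  simpa using htot
end

section
/- Let Λ ∈ ℝ^{r×r} be positive semidefinite, σ² > 0, μ₁,…,μ_N ∈ ℝ^r, and γ† ∈ ℝ^N with γ† ≠ 0. Define Q∞(γ) := m(γ)ᵀ Λ m(γ) + (1 + ‖γ‖²) σ², where m(γ) := Σ_{i=1}^N (γ_i† − γ_i) μ_i. Then there exists γ ∈ ℝ^N with Q∞(γ) < Q∞(γ†); in particular, γ† is not a minimizer of Q∞. -/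
/-- Supplement S1.1 of the paper: the true synthetic control weight vector `γ†` is not a
minimizer of the limiting OLS criterion
`Q∞(γ) = m(γ)ᵀ Λ m(γ) + (1 + ‖γ‖²) σ²`, `m(γ) = Σ_i (γ†_i − γ_i) μ_i`,
whenever `Λ` is positive semidefinite, `σ² > 0`, and `γ† ≠ 0`: some `γ` achieves a
strictly smaller value. -/
theorem spsc_ols_inconsistency {r N : ℕ}
    (Λ : Matrix (Fin r) (Fin r) ℝ) (hΛ : Λ.PosSemidef)
    (σ2 : ℝ) (hσ2 : 0 < σ2)
    (m : Fin N → Fin r → ℝ)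
    (γdag : Fin N → ℝ) (hγdag : γdag ≠ 0) :
    ∃ γ : Fin N → ℝ,
      (∑ j, ∑ k, (∑ i, (γdag i - γ i) * m i j) * Λ j k * (∑ i, (γdag i - γ i) * m i k))
        + (1 + ∑ i, (γ i) ^ 2) * σ2
      < (∑ j, ∑ k,
          (∑ i, (γdag i - γdag i) * m i j) * Λ j k * (∑ i, (γdag i - γdag i) * m i k))
        + (1 + ∑ i, (γdag i) ^ 2) * σ2 := by
  set v : Fin r → ℝ := fun j => ∑ i, γdag i * m i j with hv
  set c : ℝ := ∑ j, ∑ k, v j * Λ j k * v k with hc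
  set s : ℝ := ∑ i, (γdag i) ^ 2 with hs
  have hc0 : 0 ≤ c := by
    have h := hΛ.dotProduct_mulVec_nonneg v
    have hce : c = dotProduct (star v) (Λ.mulVec v) := by
      simp only [star_trivial, dotProduct, Matrix.mulVec, Finset.mul_sum, hc]
      exact Finset.sum_congr rfl fun j _ => Finset.sum_congr rfl fun k _ => by ring
    rw [hce]; exact h
  have hs0 : 0 < s := by
    obtain ⟨i, hi⟩ := Function.ne_iff.mp hγdag
    have h2 : (0:ℝ) < (γdag i) ^ 2 :=
      lt_of_le_of_ne (sq_nonneg _) (Ne.symm (pow_ne_zero 2 hi))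
    refine lt_of_lt_of_le h2 ?_
    rw [hs]
    exact Finset.single_le_sum (f := fun j => (γdag j) ^ 2)
      (fun j _ => sq_nonneg _) (Finset.mem_univ i)
  set ε : ℝ := σ2 * s / (c + σ2 * s) with hε
  have hden : 0 < c + σ2 * s := by nlinarith
  have hε0 : 0 < ε := by positivity
  have hεkey : ε * (c + σ2 * s) = σ2 * s := by
    rw [hε, div_mul_cancel₀ _ hden.ne']
  refine ⟨fun i => (1 - ε) * γdag i, ?_⟩
  have hsub : ∀ i, γdag i - (1 - ε) * γdag i = ε * γdag i := by intro i; ring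
  have hsum : ∀ j, (∑ i, (γdag i - (1 - ε) * γdag i) * m i j) = ε * v j := by
    intro j
    simp only [hsub, hv, Finset.mul_sum]
    exact Finset.sum_congr rfl fun i _ => by ring
  have hself : ∀ j, (∑ i, (γdag i - γdag i) * m i j) = 0 := by
    intro j; simp
  simp only [hsum, hself]
  have hq : (∑ j, ∑ k, (ε * v j) * Λ j k * (ε * v k)) = ε ^ 2 * c := by
    simp only [hc, Finset.mul_sum]
    exact Finset.sum_congr rfl fun j _ => Finset.sum_congr rfl fun k _ => by ring
  rw [hq]
  have hγ2 : (∑ i, ((1 - ε) * γdag i) ^ 2) = (1 - ε) ^ 2 * s := by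
    rw [hs, Finset.mul_sum]
    exact Finset.sum_congr rfl fun i _ => by ring
  rw [hγ2]
  simp only [zero_mul, mul_zero, Finset.sum_const_zero, zero_add]
  nlinarith [sq_nonneg ε, mul_pos hε0 (mul_pos hσ2 hs0)]
end

section
/- Let (Ω, ℱ, μ) be a probability space, W : Ω → {0,1}² and Y : Ω → {0,1} measurable, and suppose μ(W = w) > 0 for each of the four values w ∈ {0,1}². Then there exists a function q : {0,1}² → ℝ such that μ[q ∘ W | σ(Y)] = 0 μ-almost everywhere, yet q ∘ W is not μ-almost everywhere equal to 0. In particular, the completeness condition fails. -/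
open MeasureTheory

/-- Failure of completeness with a binary outcome and two binary donors
(Supplement S3.3, equation (S.11) of the paper): if `W : Ω → {0,1}²` takes each of its
four values with positive probability and `Y : Ω → {0,1}`, then there exists a function
`q` with `μ[q ∘ W | σ(Y)] = 0` a.e. but `q ∘ W` not a.e. zero. -/
theorem spsc_completeness_fails_binary {Ω : Type*} [MeasurableSpace Ω]
    (μ : Measure Ω) [IsProbabilityMeasure μ]
    (W : Ω → Fin 2 × Fin 2) (Y : Ω → Fin 2)
    (hW : Measurable W) (hY : Measurable Y)
    (hpos : ∀ w : Fin 2 × Fin 2, 0 < μ {ω | W ω = w}) :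
    ∃ q : Fin 2 × Fin 2 → ℝ,
      μ[q ∘ W | MeasurableSpace.comap Y inferInstance] =ᵐ[μ] 0 ∧
      ¬ (q ∘ W =ᵐ[μ] 0) := by
  classical
  have hm : MeasurableSpace.comap Y inferInstance ≤ ‹MeasurableSpace Ω› := hY.comap_le
  -- the 2×4 matrix of joint probabilities
  set M : Matrix (Fin 2) (Fin 2 × Fin 2) ℝ :=
    fun y w => (μ (Y ⁻¹' {y} ∩ W ⁻¹' {w})).toReal with hM
  -- its kernel is nontrivial
  have hnotinj : ¬ Function.Injective M.mulVecLin := by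
    intro h
    have h4 := LinearMap.finrank_le_finrank_of_injective h
    simp [Module.finrank_fintype_fun_eq_card] at h4
  rw [Function.not_injective_iff] at hnotinj
  obtain ⟨a, b, hab, hne⟩ := hnotinj
  set q : Fin 2 × Fin 2 → ℝ := a - b with hqdef
  have hTq : M.mulVec q = 0 := by
    have : M.mulVecLin (a - b) = 0 := by rw [map_sub, hab, sub_self]
    simpa [Matrix.mulVecLin] using this
  have hq_ne : ∃ w, q w ≠ 0 := by
    by_contra h
    push_neg at h
    apply hne
    funext w
    have := h w
    simpa [hqdef, sub_eq_zero] using this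
  refine ⟨q, ?_, ?_⟩
  · -- conditional expectation is a.e. zero
    have hWw : ∀ w : Fin 2 × Fin 2, MeasurableSet (W ⁻¹' {w}) :=
      fun w => hW (measurableSet_singleton w)
    have hrepr : ∀ ω, q (W ω) =
        ∑ w : Fin 2 × Fin 2, Set.indicator (W ⁻¹' {w}) (fun _ => q w) ω := by
      intro ω
      rw [Finset.sum_eq_single (W ω)]
      · simp
      · intro w _ hw
        simp [Set.indicator_apply, Ne.symm hw]
      · simp
    have hqint : Integrable (q ∘ W) μ := by
      have : Integrable (fun ω => ∑ w : Fin 2 × Fin 2,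
          Set.indicator (W ⁻¹' {w}) (fun _ => q w) ω) μ := by
        apply integrable_finset_sum
        intro w _
        exact (integrable_const (q w)).indicator (hWw w)
      apply this.congr
      filter_upwards with ω
      exact (hrepr ω).symm
    have hint : ∀ s : Set Ω, MeasurableSet s →
        ∫ ω in s, q (W ω) ∂μ
          = ∑ w : Fin 2 × Fin 2, q w * (μ (s ∩ W ⁻¹' {w})).toReal := by
      intro s hs
      calc ∫ ω in s, q (W ω) ∂μ
          = ∫ ω in s, ∑ w : Fin 2 × Fin 2,
              Set.indicator (W ⁻¹' {w}) (fun _ => q w) ω ∂μ := by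
            apply integral_congr_ae
            filter_upwards with ω
            exact hrepr ω
        _ = ∑ w : Fin 2 × Fin 2,
              ∫ ω in s, Set.indicator (W ⁻¹' {w}) (fun _ => q w) ω ∂μ := by
            apply integral_finset_sum
            intro w _
            exact ((integrable_const (q w)).indicator (hWw w)).restrict
        _ = ∑ w : Fin 2 × Fin 2, q w * (μ (s ∩ W ⁻¹' {w})).toReal := by
            refine Finset.sum_congr rfl fun w _ => ?_
            rw [setIntegral_indicator (hWw w), setIntegral_const, smul_eq_mul, mul_comm, measureReal_def]
    have hy : ∀ y : Fin 2, ∫ ω in Y ⁻¹' {y}, q (W ω) ∂μ = 0 := by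
      intro y
      rw [hint _ (hY (measurableSet_singleton y))]
      have h0 := congrFun hTq y
      simpa [Matrix.mulVec, dotProduct, hM, mul_comm] using h0
    have hall : ∀ s, MeasurableSet[MeasurableSpace.comap Y inferInstance] s →
        ∫ ω in s, q (W ω) ∂μ = 0 := by
      rintro s ⟨t, -, rfl⟩
      have hU : Y ⁻¹' t = ⋃ y ∈ t.toFinset, Y ⁻¹' {y} := by
        ext ω; simp
      rw [hU, integral_biUnion_finset]
      · exact Finset.sum_eq_zero fun y _ => hy y
      · intro y _
        exact hY (measurableSet_singleton y)
      · intro y _ z _ hyz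
        exact (Set.disjoint_singleton.2 hyz).preimage Y
      · intro y _
        exact hqint.integrableOn
    refine (ae_eq_condExp_of_forall_setIntegral_eq hm hqint ?_ ?_ ?_).symm
    · intro s _ _
      exact (integrable_zero _ _ _).integrableOn
    · intro s hs _
      simp only [Pi.zero_apply, integral_zero]
      exact (hall s hs).symm
    · exact ⟨0, stronglyMeasurable_zero, Filter.EventuallyEq.rfl⟩
  · -- q ∘ W is not a.e. zero
    obtain ⟨w, hw⟩ := hq_ne
    intro h
    have hnull : μ {ω | ¬ (q ∘ W) ω = (0 : Ω → ℝ) ω} = 0 := ae_iff.mp h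
    have hsub : {ω | W ω = w} ⊆ {ω | ¬ (q ∘ W) ω = (0 : Ω → ℝ) ω} := by
      intro ω hω
      simp only [Set.mem_setOf_eq] at hω ⊢
      simp [Function.comp, hω, hw]
    have := measure_mono_null hsub hnull
    exact absurd this (hpos w).ne'
end
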